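/- arXiv:1202.1175 — 6 statements merged into one kernel-verified Lean document; each statement's English description precedes it below -/
import Mathlib

section
/- Let Y be a compact metrizable space, Y₁ ⊆ Y a closed subset, n ≥ 1, Xₙ = Fin n discrete, and Z = Xₙ × Y. Then the quotient space Z/∼ is metrizable. -/
/-- The identification relation on `Fin n × Y`: `(x', y') ∼ (x'', y'')` iff
`y' = y''` and (`y' ∈ Y₁` or `x' = x''`). -/
def paperRel (n : ℕ) {Y : Type*} (Y₁ : Set Y) (z₁ z₂ : Fin n × Y) : Prop :=
  z₁.2 = z₂.2 ∧ (z₁.2 ∈ Y₁ ∨ z₁.1 = z₂.1)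

open Metric TopologicalSpace

/-- Auxiliary: if there is a continuous `φ : Y → ℝ` vanishing exactly on `Y₁`,
then the quotient is metrizable. -/
theorem aux_metrizable {Y : Type*} [TopologicalSpace Y] [CompactSpace Y]
    [TopologicalSpace.MetrizableSpace Y] (Y₁ : Set Y)
    (n : ℕ) (φ : Y → ℝ) (hφ : Continuous φ) (hφ0 : ∀ y, φ y = 0 ↔ y ∈ Y₁) :
    TopologicalSpace.MetrizableSpace (Quot (paperRel n Y₁)) := by
  letI := TopologicalSpace.metrizableSpaceMetric Y
  classical
  set h : Fin n × Y → Y × (Fin n → ℝ) :=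
    fun z => (z.2, fun i => if z.1 = i then φ z.2 else 0) with hh
  have hresp : ∀ z₁ z₂, paperRel n Y₁ z₁ z₂ → h z₁ = h z₂ := by
    rintro ⟨x₁, y₁⟩ ⟨x₂, y₂⟩ ⟨hy, hc⟩
    simp only at hy; subst hy
    rcases hc with hmem | hx
    · simp only [hh, Prod.mk.injEq, true_and]
      funext i
      have h0 : φ y₁ = 0 := (hφ0 y₁).2 hmem
      by_cases h1 : x₁ = i <;> by_cases h2 : x₂ = i <;> simp [h1, h2, h0]
    · simp only at hx
      subst hx
      rfl
  set f : Quot (paperRel n Y₁) → Y × (Fin n → ℝ) := Quot.lift h hresp with hf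
  have hfc : Continuous f := by
    apply continuous_quot_lift
    refine continuous_snd.prodMk (continuous_pi fun i => ?_)
    refine Continuous.if ?_ (hφ.comp continuous_snd) continuous_const
    have : IsClopen {z : Fin n × Y | z.1 = i} :=
      (isClopen_discrete {i}).preimage continuous_fst
    intro a ha
    rw [this.frontier_eq] at ha
    exact ha.elim
  have hfi : Function.Injective f := by
    rintro z₁ z₂
    refine Quot.induction_on z₁ fun a => Quot.induction_on z₂ fun b hab => ?_
    obtain ⟨x₁, y₁⟩ := a; obtain ⟨x₂, y₂⟩ := b
    simp only [hf, hh, Prod.mk.injEq] at hab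
    obtain ⟨hy, hfun⟩ := hab
    subst hy
    apply Quot.sound
    refine ⟨rfl, ?_⟩
    have := congrFun hfun x₁
    simp only [if_pos rfl] at this
    by_cases hx : x₂ = x₁
    · exact Or.inr hx.symm
    · rw [if_neg hx] at this
      exact Or.inl ((hφ0 y₁).1 this)
  have hemb := hfc.isClosedEmbedding hfi
  exact hemb.isEmbedding.metrizableSpace

/-- For a compact metrizable space `Y`, a closed subset `Y₁ ⊆ Y`, and
`Z = Fin n × Y`, the quotient space `Z/∼` is metrizable. -/
theorem quotient_metrizableSpace {Y : Type*} [TopologicalSpace Y] [CompactSpace Y]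
    [TopologicalSpace.MetrizableSpace Y] (Y₁ : Set Y) (hY₁ : IsClosed Y₁)
    (n : ℕ) (hn : 0 < n) :
    TopologicalSpace.MetrizableSpace (Quot (paperRel n Y₁)) := by
  letI := TopologicalSpace.metrizableSpaceMetric Y
  rcases Y₁.eq_empty_or_nonempty with hE | hne
  · subst hE
    exact aux_metrizable ∅ n (fun _ => 1) continuous_const (by simp)
  · refine aux_metrizable Y₁ n (fun y => infDist y Y₁)
      (continuous_infDist_pt Y₁) fun y => ?_
    rw [← hY₁.mem_iff_infDist_zero hne]
end

section
/- Let Y be a compact Hausdorff space that is connected, let Y₁ ⊆ Y be a closed subset that is nonempty, let n ≥ 1, Xₙ = Fin n discrete, and Z = Xₙ × Y. Then the quotient space Z/∼ is connected. -/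
/-- For a connected compact Hausdorff space `Y` and a nonempty closed
subset `Y₁ ⊆ Y`, the quotient space `Z/∼` of `Z = Fin n × Y` is connected. -/
theorem quotient_connectedSpace {Y : Type*} [TopologicalSpace Y] [CompactSpace Y]
    [T2Space Y] [ConnectedSpace Y] (Y₁ : Set Y) (hY₁ : IsClosed Y₁)
    (hY₁ne : Y₁.Nonempty) (n : ℕ) (hn : 0 < n) :
    ConnectedSpace (Quot (paperRel n Y₁)) := by
  obtain ⟨y₀, hy₀⟩ := hY₁ne
  set q : Fin n × Y → Quot (paperRel n Y₁) := Quot.mk _ with hq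
  have hqc : Continuous q := continuous_quot_mk
  have hcov : (Set.univ : Set (Quot (paperRel n Y₁))) =
      ⋃ i : Fin n, (fun y => q (i, y)) '' Set.univ := by
    ext z
    simp only [Set.mem_univ, true_iff, Set.mem_iUnion, Set.image_univ, Set.mem_range]
    obtain ⟨⟨i, y⟩, rfl⟩ := Quot.exists_rep z
    exact ⟨i, y, rfl⟩
  have hmem : ∀ i : Fin n, q (⟨0, hn⟩, y₀) ∈ (fun y => q (i, y)) '' Set.univ := by
    intro i
    refine ⟨y₀, Set.mem_univ _, ?_⟩
    exact (Quot.sound ⟨rfl, Or.inl hy₀⟩).symm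
  have hpre : IsPreconnected (Set.univ : Set (Quot (paperRel n Y₁))) := by
    rw [hcov]
    refine isPreconnected_iUnion ?_ ?_
    · exact ⟨q (⟨0, hn⟩, y₀), fun s ⟨i, hi⟩ => hi ▸ hmem i⟩
    · intro i
      exact (isPreconnected_univ.image _ ((hqc.comp (Continuous.prodMk_right i)).continuousOn))
  haveI : PreconnectedSpace (Quot (paperRel n Y₁)) := ⟨hpre⟩
  exact ⟨⟨q (⟨0, hn⟩, y₀)⟩⟩
end

section
/- Let Y be a compact Hausdorff space, n ≥ 1, Xₙ = Fin n discrete, Z = Xₙ × Y, let A be a unital C*-algebra, and let (a_{ij})_{1 ≤ i,j ≤ n} be a magic unitary in A. Then the map α : C(Z, ℂ) → C(Z, A) defined by α(F)(x_k, y) = Σ_{i=1}^n F(x_i, y) a_{ki} is a unital star-algebra homomorphism (ℂ-linear, multiplicative, unital, and star-preserving). -/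
/-- The map `α : C(Fin n × Y, ℂ) → C(Fin n × Y, A)` determined by a family
`a : Fin n → Fin n → A` via `α(F)(x_k, y) = ∑ i, F(x_i, y) a_{k i}`. -/
noncomputable def alphaMap {Y : Type*} [TopologicalSpace Y] {A : Type*} [NormedRing A]
    [NormedAlgebra ℂ A] (n : ℕ) (a : Fin n → Fin n → A) (F : C(Fin n × Y, ℂ)) :
    C(Fin n × Y, A) where
  toFun z := ∑ i, F (i, z.2) • a z.1 i
  continuous_toFun := by
    apply continuous_finset_sum
    intro i _
    exact (F.continuous.comp (continuous_const.prodMk continuous_snd)).smul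
      (Continuous.comp (continuous_of_discreteTopology (f := fun k : Fin n => a k i))
        continuous_fst)

lemma magic_orth {A : Type*} [NormedRing A] [StarRing A] [CStarRing A] [NormedAlgebra ℂ A]
    [StarModule ℂ A] [CompleteSpace A] {n : ℕ} (a : Fin n → Fin n → A)
    (haproj : ∀ i j, star (a i j) = a i j ∧ a i j * a i j = a i j)
    (harow : ∀ i, ∑ j, a i j = 1) :
    ∀ k i j, i ≠ j → a k i * a k j = 0 := by
  letI : CStarAlgebra A := {}
  letI := CStarAlgebra.spectralOrder A
  haveI := CStarAlgebra.spectralOrderedRing A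
  intro k i j hij
  have key : ∑ l ∈ Finset.univ.erase j, a k j * a k l * a k j = 0 := by
    have h1 : ∑ l, a k j * a k l * a k j = a k j := by
      rw [← Finset.sum_mul, ← Finset.mul_sum, harow k, mul_one, (haproj k j).2]
    have h2 : ∑ l, a k j * a k l * a k j
        = a k j * a k j * a k j + ∑ l ∈ Finset.univ.erase j, a k j * a k l * a k j :=
      (Finset.add_sum_erase _ _ (Finset.mem_univ j)).symm
    have h3 : a k j * a k j * a k j = a k j := by
      rw [(haproj k j).2, (haproj k j).2]
    rw [h1, h3] at h2
    exact (left_eq_add.mp h2)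
  have heq : ∀ l, a k j * a k l * a k j = star (a k l * a k j) * (a k l * a k j) := by
    intro l
    rw [star_mul, (haproj k l).1, (haproj k j).1]
    simp only [mul_assoc]
    rw [← mul_assoc (a k l), (haproj k l).2]
  have hterm : a k j * a k i * a k j = 0 := by
    refine (Finset.sum_eq_zero_iff_of_nonneg ?_).mp key i (Finset.mem_erase.mpr ⟨hij, Finset.mem_univ i⟩)
    intro l _
    rw [heq l]
    exact star_mul_self_nonneg _
  have : a k i * a k j = 0 :=
    CStarRing.star_mul_self_eq_zero_iff _ |>.mp (by rw [← heq i]; exact hterm)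
  exact this

/-- If `(a_{ij})` is a magic unitary in a unital C*-algebra `A`, then
`α : C(Z, ℂ) → C(Z, A)`, `α(F)(x_k, y) = ∑ i, F(x_i, y) a_{k i}`, is a unital
star-algebra homomorphism: ℂ-linear, multiplicative, unital and star-preserving. -/
theorem alphaMap_starAlgHom {Y : Type*} [TopologicalSpace Y] [CompactSpace Y] [T2Space Y]
    {A : Type*} [NormedRing A] [StarRing A] [CStarRing A] [NormedAlgebra ℂ A]
    [StarModule ℂ A] [CompleteSpace A] (n : ℕ) (hn : 0 < n) (a : Fin n → Fin n → A)
    (haproj : ∀ i j, star (a i j) = a i j ∧ a i j * a i j = a i j)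
    (harow : ∀ i, ∑ j, a i j = 1) (hacol : ∀ j, ∑ i, a i j = 1) :
    (∀ F G : C(Fin n × Y, ℂ), alphaMap n a (F + G) = alphaMap n a F + alphaMap n a G) ∧
    (∀ (c : ℂ) (F : C(Fin n × Y, ℂ)), alphaMap n a (c • F) = c • alphaMap n a F) ∧
    (∀ F G : C(Fin n × Y, ℂ), alphaMap n a (F * G) = alphaMap n a F * alphaMap n a G) ∧
    alphaMap (Y := Y) n a 1 = 1 ∧
    (∀ F : C(Fin n × Y, ℂ), alphaMap n a (star F) = star (alphaMap n a F)) := by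
  have orth := magic_orth a haproj harow
  have happ : ∀ (F : C(Fin n × Y, ℂ)) z, alphaMap n a F z = ∑ i, F (i, z.2) • a z.1 i :=
    fun F z => rfl
  refine ⟨?_, ?_, ?_, ?_, ?_⟩
  · intro F G
    ext z
    simp [happ, add_smul, Finset.sum_add_distrib]
  · intro c F
    ext z
    simp [happ, smul_smul, Finset.smul_sum]
  · intro F G
    ext z
    simp only [happ, ContinuousMap.mul_apply, Finset.sum_mul_sum, smul_mul_smul]
    rw [Finset.sum_comm]
    refine Finset.sum_congr rfl fun i _ => ?_
    rw [Finset.sum_eq_single i]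
    · rw [(haproj z.1 i).2]
    · intro j _ hj
      rw [orth z.1 j i hj, smul_zero]
    · simp
  · ext z
    simp [happ, harow]
  · intro F
    ext z
    simp [happ, (haproj _ _).1]
end

section
/- Let Y be a compact Hausdorff space, n ≥ 1, Xₙ = Fin n discrete, Z = Xₙ × Y, A a unital C*-algebra, (a_{ij}) a magic unitary in A, and α : C(Z, ℂ) → C(Z, A) the map α(F)(x_k, y) = Σ_{i=1}^n F(x_i, y) a_{ki}. Then the linear span of the set {z ↦ α(F)(z) · a : F ∈ C(Z, ℂ), a ∈ A} is dense in C(Z, A) with respect to the supremum norm. -/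
lemma proj_orthogonal {A : Type*} [NormedRing A] [StarRing A] [CStarRing A] [NormedAlgebra ℂ A]
    [StarModule ℂ A] [CompleteSpace A] {n : ℕ} (p : Fin n → A)
    (hp : ∀ i, star (p i) = p i ∧ p i * p i = p i) (hsum : ∑ i, p i = 1)
    {k m : Fin n} (hkm : k ≠ m) : p k * p m = 0 := by
  letI : CStarAlgebra A := { }
  letI := CStarAlgebra.spectralOrder A
  haveI := CStarAlgebra.spectralOrderedRing A
  have key : ∑ i, p m * p i * p m = p m := by
    rw [← Finset.sum_mul, ← Finset.mul_sum, hsum, mul_one, (hp m).2]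
  have hzero : ∑ i ∈ Finset.univ.erase m, p m * p i * p m = 0 := by
    have hsplit := Finset.add_sum_erase Finset.univ (fun i => p m * p i * p m)
      (Finset.mem_univ m)
    beta_reduce at hsplit
    rw [key, (hp m).2, (hp m).2] at hsplit
    exact add_eq_left.mp hsplit
  have hterm : p m * p k * p m = 0 := by
    have hnn : ∀ i ∈ Finset.univ.erase m, (0 : A) ≤ p m * p i * p m := by
      intro i _
      have h : star (p i * p m) * (p i * p m) = p m * p i * p m := by
        rw [star_mul, (hp i).1, (hp m).1, mul_assoc, ← mul_assoc (p i), (hp i).2, ← mul_assoc]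
      rw [← h]
      exact star_mul_self_nonneg _
    exact (Finset.sum_eq_zero_iff_of_nonneg hnn).mp hzero k
      (Finset.mem_erase.mpr ⟨hkm, Finset.mem_univ k⟩)
  have h2 : star (p k * p m) * (p k * p m) = 0 := by
    rw [star_mul, (hp k).1, (hp m).1, mul_assoc, ← mul_assoc (p k), (hp k).2, ← mul_assoc]
    exact hterm
  exact CStarRing.star_mul_self_eq_zero_iff _ |>.mp h2

open Finset in
lemma dense_span_smul_const {Z : Type*} [TopologicalSpace Z] [CompactSpace Z] [T2Space Z]
    {A : Type*} [NormedRing A] [NormedAlgebra ℂ A] :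
    Dense (Submodule.span ℂ {h : C(Z, A) | ∃ (φ : C(Z, ℂ)) (c : A), ∀ z, h z = φ z • c} :
      Set C(Z, A)) := by
  rw [Metric.dense_iff]
  intro G r hr
  set ε := r / 2 with hε
  have hε0 : 0 < ε := by positivity
  -- open cover
  set U : Z → Set Z := fun t => {z | ‖G z - G t‖ < ε} with hU
  have hUopen : ∀ t, IsOpen (U t) :=
    fun t => isOpen_lt ((G.continuous.sub continuous_const).norm) continuous_const
  have hUcover : (Set.univ : Set Z) ⊆ ⋃ t, U t := by
    intro z _
    exact Set.mem_iUnion.mpr ⟨z, by simp [hU, hε0]⟩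
  obtain ⟨f, hf⟩ := PartitionOfUnity.exists_isSubordinate isClosed_univ U hUopen hUcover
  have hfin : {i | (Function.support (f i)).Nonempty}.Finite :=
    f.locallyFinite.finite_nonempty_of_compact
  set T : Finset Z := hfin.toFinset with hT
  have hsupp : ∀ z : Z, (Function.support fun i => f i z) ⊆ ↑T := by
    intro z i hi
    simp only [hT, Set.Finite.coe_toFinset, Set.mem_setOf_eq]
    exact ⟨z, hi⟩
  have hsum1 : ∀ z : Z, ∑ t ∈ T, f t z = 1 := by
    intro z
    rw [← finsum_eq_sum_of_support_subset _ (hsupp z)]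
    exact f.sum_eq_one (Set.mem_univ z)
  -- the approximating element
  have contφ : ∀ t : Z, Continuous fun z : Z => ((f t z : ℝ) : ℂ) :=
    fun t => Complex.continuous_ofReal.comp (f t).continuous
  set g : C(Z, A) := ∑ t ∈ T, ⟨fun z => ((f t z : ℝ) : ℂ) • G t,
    (contφ t).smul continuous_const⟩ with hg
  refine ⟨g, ?_, ?_⟩
  · rw [Metric.mem_ball, dist_comm]
    refine lt_of_le_of_lt (ContinuousMap.dist_le hε0.le |>.mpr fun z => ?_) (by linarith [hε])
    rw [dist_eq_norm]
    have hgz : g z = ∑ t ∈ T, ((f t z : ℝ) : ℂ) • G t := by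
      simp [hg, ContinuousMap.coe_sum]
    have hGz : G z = ∑ t ∈ T, ((f t z : ℝ) : ℂ) • G z := by
      rw [← Finset.sum_smul]
      have : (∑ t ∈ T, ((f t z : ℝ) : ℂ)) = 1 := by
        rw [← Complex.ofReal_sum, hsum1 z, Complex.ofReal_one]
      rw [this, one_smul]
    have key : G z - g z = ∑ t ∈ T, ((f t z : ℝ) : ℂ) • (G z - G t) := by
      calc G z - g z = (∑ t ∈ T, ((f t z : ℝ) : ℂ) • G z) - ∑ t ∈ T, ((f t z : ℝ) : ℂ) • G t := by
            rw [← hGz, ← hgz]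
        _ = ∑ t ∈ T, (((f t z : ℝ) : ℂ) • G z - ((f t z : ℝ) : ℂ) • G t) := by
            rw [Finset.sum_sub_distrib]
        _ = ∑ t ∈ T, ((f t z : ℝ) : ℂ) • (G z - G t) := by
            simp [smul_sub]
    rw [key]
    calc ‖∑ t ∈ T, ((f t z : ℝ) : ℂ) • (G z - G t)‖
        ≤ ∑ t ∈ T, ‖((f t z : ℝ) : ℂ) • (G z - G t)‖ := norm_sum_le _ _
      _ ≤ ∑ t ∈ T, f t z * ε := by
          refine Finset.sum_le_sum fun t _ => ?_
          rw [norm_smul, Complex.norm_real, Real.norm_of_nonneg (f.nonneg t z)]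
          by_cases h0 : f t z = 0
          · simp [h0]
          · have hzU : z ∈ U t := hf t (subset_tsupport _ h0)
            exact mul_le_mul_of_nonneg_left (le_of_lt hzU) (f.nonneg t z)
      _ = ε := by rw [← Finset.sum_mul, hsum1 z, one_mul]
  · exact SetLike.mem_coe.mpr (Submodule.sum_mem _ fun t _ =>
      Submodule.subset_span ⟨⟨fun z => ((f t z : ℝ) : ℂ), contφ t⟩, G t, fun z => rfl⟩)

/-- The linear span of `{z ↦ α(F)(z) · a : F ∈ C(Z, ℂ), a ∈ A}` is
dense in `C(Z, A)` (with the supremum norm, which gives the topology of `C(Z, A)`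
for compact `Z`). -/
theorem alphaMap_span_dense {Y : Type*} [TopologicalSpace Y] [CompactSpace Y] [T2Space Y]
    {A : Type*} [NormedRing A] [StarRing A] [CStarRing A] [NormedAlgebra ℂ A]
    [StarModule ℂ A] [CompleteSpace A] (n : ℕ) (hn : 0 < n) (a : Fin n → Fin n → A)
    (haproj : ∀ i j, star (a i j) = a i j ∧ a i j * a i j = a i j)
    (harow : ∀ i, ∑ j, a i j = 1) (hacol : ∀ j, ∑ i, a i j = 1) :
    Dense (Submodule.span ℂ {h : C(Fin n × Y, A) | ∃ (F : C(Fin n × Y, ℂ)) (b : A),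
      h = alphaMap n a F * ContinuousMap.const (Fin n × Y) b} : Set C(Fin n × Y, A)) := by
  have horth : ∀ (j k m : Fin n), k ≠ m → a k j * a m j = 0 := fun j k m hkm =>
    proj_orthogonal (fun i => a i j) (fun i => haproj i j) (hacol j) hkm
  refine Dense.mono ?_ (dense_span_smul_const (Z := Fin n × Y) (A := A))
  refine SetLike.coe_subset_coe.mpr (Submodule.span_le.mpr ?_)
  rintro h ⟨φ, c, hφ⟩
  set F : Fin n → Fin n → C(Fin n × Y, ℂ) := fun m j =>
    ⟨fun z => (if z.1 = j then (1:ℂ) else 0) * φ (m, z.2),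
      ((Continuous.comp (continuous_of_discreteTopology
          (f := fun i : Fin n => if i = j then (1:ℂ) else 0)) continuous_fst).mul
        (φ.continuous.comp (continuous_const.prodMk continuous_snd)))⟩ with hF
  have hrep : h = ∑ m : Fin n, ∑ j : Fin n,
      alphaMap n a (F m j) * ContinuousMap.const (Fin n × Y) (a m j * c) := by
    ext z
    obtain ⟨k, y⟩ := z
    rw [hφ (k, y)]
    simp only [ContinuousMap.sum_apply, ContinuousMap.mul_apply, ContinuousMap.const_apply,
      alphaMap, ContinuousMap.coe_mk, hF]
    have inner : ∀ m j : Fin n,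
        (∑ i, ((if i = j then (1:ℂ) else 0) * φ (m, y)) • a k i) = φ (m, y) • a k j := by
      intro m j
      simp [ite_mul, one_mul, zero_mul, ite_smul, zero_smul]
    simp only [inner]
    have hj : ∀ m : Fin n, ∑ j, (φ (m, y) • a k j) * (a m j * c)
        = if k = m then φ (m, y) • c else 0 := by
      intro m
      have : ∀ j, (φ (m, y) • a k j) * (a m j * c) = φ (m, y) • ((a k j * a m j) * c) := by
        intro j
        rw [smul_mul_assoc, mul_assoc]
      simp only [this]
      rw [← Finset.smul_sum, ← Finset.sum_mul]
      by_cases hkm : k = m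
      · subst hkm
        have : ∀ j, a k j * a k j = a k j := fun j => (haproj k j).2
        simp [this, harow k]
      · have : ∀ j : Fin n, a k j * a m j = 0 := fun j => horth j k m hkm
        simp [this, hkm]
    simp only [hj]
    simp
  rw [hrep]
  exact Submodule.sum_mem _ fun m _ => Submodule.sum_mem _ fun j _ =>
    Submodule.subset_span ⟨F m j, a m j * c, rfl⟩
end

section
/- Let Y be a compact Hausdorff space, Y₁ ⊆ Y closed, n ≥ 1, Xₙ = Fin n discrete, Z = Xₙ × Y, A a unital C*-algebra, (a_{ij}) a magic unitary in A, and α : C(Z, ℂ) → C(Z, A) the map α(F)(x_k, y) = Σ_{i=1}^n F(x_i, y) a_{ki}. Then the linear span of the set {z ↦ α(F)(z) · a : F ∈ S, a ∈ A} is dense, with respect to the supremum norm, in S_A = {g ∈ C(Z, A) : g(x_k, y) = g(x_l, y) for all k, l ∈ Fin n and all y ∈ Y₁}. -/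
section Aux

variable {A : Type*} [NormedRing A] [StarRing A] [CStarRing A] [NormedAlgebra ℂ A]
    [StarModule ℂ A] [CompleteSpace A]

private lemma magic_col_orth {n : ℕ} {a : Fin n → Fin n → A}
    (haproj : ∀ i j, star (a i j) = a i j ∧ a i j * a i j = a i j)
    (hacol : ∀ j, ∑ i, a i j = 1) {k l : Fin n} (i : Fin n) (hkl : l ≠ k) :
    a k i * a l i = 0 := by
  letI : CStarAlgebra A := {}
  letI := CStarAlgebra.spectralOrder A
  haveI := CStarAlgebra.spectralOrderedRing A
  have hsq : ∀ m (x : A), a m i * (a m i * x) = a m i * x := fun m x => by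
    rw [← mul_assoc, (haproj m i).2]
  have hterm : ∀ m, star (a m i * a k i) * (a m i * a k i) = a k i * a m i * a k i := by
    intro m
    rw [star_mul, (haproj m i).1, (haproj k i).1]
    simp only [mul_assoc, hsq]
  have h1 : ∑ m, a k i * a m i * a k i = a k i := by
    rw [← Finset.sum_mul, ← Finset.mul_sum, hacol i, mul_one, (haproj k i).2]
  have hnn : ∀ m ∈ Finset.univ, (0 : A) ≤ a k i * a m i * a k i := fun m _ => by
    rw [← hterm m]; exact star_mul_self_nonneg _
  have h2 : ∑ m ∈ Finset.univ.erase k, a k i * a m i * a k i = 0 := by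
    have h3 : a k i * a k i * a k i + ∑ m ∈ Finset.univ.erase k, a k i * a m i * a k i
        = a k i := by
      rw [Finset.add_sum_erase Finset.univ (fun m => a k i * a m i * a k i)
        (Finset.mem_univ k)]
      exact h1
    rw [(haproj k i).2, (haproj k i).2] at h3
    rwa [add_eq_left] at h3
  have h4 : a k i * a l i * a k i = 0 :=
    (Finset.sum_eq_zero_iff_of_nonneg (fun m _ => hnn m (Finset.mem_univ m))).mp h2 l
      (Finset.mem_erase.mpr ⟨hkl, Finset.mem_univ l⟩)
  have h5 : a l i * a k i = 0 := by
    have h6 : star (a l i * a k i) * (a l i * a k i) = 0 := by rw [hterm l, h4]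
    have h7 := CStarRing.norm_star_mul_self (x := a l i * a k i)
    rw [h6, norm_zero] at h7
    have h8 : ‖a l i * a k i‖ = 0 := by nlinarith [norm_nonneg (a l i * a k i)]
    simpa using h8
  have h9 : star (a l i * a k i) = a k i * a l i := by
    rw [star_mul, (haproj k i).1, (haproj l i).1]
  rw [← h9, h5, star_zero]

private lemma magic_sum_prod {n : ℕ} {a : Fin n → Fin n → A}
    (haproj : ∀ i j, star (a i j) = a i j ∧ a i j * a i j = a i j)
    (harow : ∀ i, ∑ j, a i j = 1) (hacol : ∀ j, ∑ i, a i j = 1) (k l : Fin n) :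
    ∑ i, a k i * a l i = (if k = l then (1 : A) else 0) := by
  by_cases h : k = l
  · subst h
    simp only [if_pos rfl]
    calc ∑ i, a k i * a k i = ∑ i, a k i := Finset.sum_congr rfl fun i _ => (haproj k i).2
    _ = 1 := harow k
  · rw [if_neg h]
    exact Finset.sum_eq_zero fun i _ => magic_col_orth haproj hacol i (fun hc => h hc.symm)

end Aux

private lemma approx_pu {X : Type*} [TopologicalSpace X] [CompactSpace X]
    {E : Type*} [NormedAddCommGroup E] [NormedSpace ℂ E] (v : C(X, E)) {ε : ℝ} (hε : 0 < ε) :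
    ∃ (t : Finset X) (f : X → C(X, ℝ)),
      (∀ p x, 0 ≤ f p x) ∧ (∀ x, ∑ p ∈ t, f p x = 1) ∧
      (∀ x, ‖v x - ∑ p ∈ t, ((f p x : ℝ) : ℂ) • v p‖ ≤ ε) := by
  set U : X → Set X := fun p => v ⁻¹' Metric.ball (v p) ε with hUdef
  have hUo : ∀ p, IsOpen (U p) := fun p => Metric.isOpen_ball.preimage v.continuous
  have hcov : (Set.univ : Set X) ⊆ ⋃ p, U p := fun x _ =>
    Set.mem_iUnion.mpr ⟨x, by simp [U, Metric.mem_ball_self hε]⟩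
  obtain ⟨t, ht⟩ := isCompact_univ.elim_finite_subcover U hUo hcov
  set g : X → C(X, ℝ) := fun p =>
    ⟨fun x => max (ε - ‖v x - v p‖) 0,
      (continuous_const.sub ((v.continuous.sub continuous_const).norm)).max
        continuous_const⟩ with hgdef
  have hg0 : ∀ p x, 0 ≤ g p x := fun p x => le_max_right _ _
  have hgU : ∀ p x, x ∈ U p → 0 < g p x := by
    intro p x hx
    have : dist (v x) (v p) < ε := hx
    rw [dist_eq_norm] at this
    exact lt_max_iff.mpr (Or.inl (by linarith))
  have hsupp : ∀ p x, g p x ≠ 0 → ‖v x - v p‖ ≤ ε := by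
    intro p x h
    by_contra hc
    push_neg at hc
    exact h (max_eq_right (by linarith))
  set G : C(X, ℝ) := ∑ p ∈ t, g p with hGdef
  have hGval : ∀ x, G x = ∑ p ∈ t, g p x := by
    intro x
    simp [G, ContinuousMap.coe_sum, Finset.sum_apply]
  have hG : ∀ x, 0 < G x := by
    intro x
    obtain ⟨p, hp, hxp⟩ := Set.mem_iUnion₂.mp (ht (Set.mem_univ x))
    rw [hGval x]
    exact Finset.sum_pos' (fun q _ => hg0 q x) ⟨p, hp, hgU p x hxp⟩
  set f : X → C(X, ℝ) := fun p =>
    ⟨fun x => g p x / G x, (g p).continuous.div G.continuous fun x => (hG x).ne'⟩ with hfdef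
  have hf0 : ∀ p x, 0 ≤ f p x := fun p x => div_nonneg (hg0 p x) (hG x).le
  have hsum : ∀ x, ∑ p ∈ t, f p x = 1 := by
    intro x
    simp only [f, ContinuousMap.coe_mk]
    rw [← Finset.sum_div, ← hGval x, div_self (hG x).ne']
  refine ⟨t, f, hf0, hsum, ?_⟩
  intro x
  have hvx : v x = ∑ p ∈ t, ((f p x : ℝ) : ℂ) • v x := by
    rw [← Finset.sum_smul]
    have h1 : (∑ p ∈ t, ((f p x : ℝ) : ℂ)) = ((∑ p ∈ t, f p x : ℝ) : ℂ) := by push_cast; ring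
    rw [h1, hsum x, Complex.ofReal_one, one_smul]
  have hsplit : v x - ∑ p ∈ t, ((f p x : ℝ) : ℂ) • v p
      = ∑ p ∈ t, ((f p x : ℝ) : ℂ) • (v x - v p) := by
    simp only [smul_sub, Finset.sum_sub_distrib]
    rw [← hvx]
  rw [hsplit]
  calc ‖∑ p ∈ t, ((f p x : ℝ) : ℂ) • (v x - v p)‖
      ≤ ∑ p ∈ t, ‖((f p x : ℝ) : ℂ) • (v x - v p)‖ := norm_sum_le _ _
    _ ≤ ∑ p ∈ t, f p x * ε := by
        apply Finset.sum_le_sum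
        intro p _
        rw [norm_smul, Complex.norm_real, Real.norm_eq_abs, abs_of_nonneg (hf0 p x)]
        by_cases hz : f p x = 0
        · simp [hz]
        · have hgz : g p x ≠ 0 := by
            intro h
            exact hz (by simp only [f, ContinuousMap.coe_mk, h, zero_div])
          exact mul_le_mul_of_nonneg_left (hsupp p x hgz) (hf0 p x)
    _ = ε := by rw [← Finset.sum_mul, hsum x, one_mul]


section Mem

variable {Y : Type*} [TopologicalSpace Y] (Y₁ : Set Y)
    {A : Type*} [NormedRing A] [StarRing A] [CStarRing A] [NormedAlgebra ℂ A]
    [StarModule ℂ A] [CompleteSpace A] (n : ℕ) (a : Fin n → Fin n → A)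

private lemma memA (harow : ∀ i, ∑ j, a i j = 1) (f : C(Y, ℂ)) (b : A) :
    ∃ h ∈ Submodule.span ℂ {h : C(Fin n × Y, A) |
        ∃ (F : C(Fin n × Y, ℂ)) (b : A),
          (∀ (i j : Fin n), ∀ y ∈ Y₁, F (i, y) = F (j, y)) ∧
          h = alphaMap n a F * ContinuousMap.const (Fin n × Y) b},
      ∀ z : Fin n × Y, h z = f z.2 • b := by
  set F : C(Fin n × Y, ℂ) := f.comp ⟨Prod.snd, continuous_snd⟩ with hF
  refine ⟨alphaMap n a F * ContinuousMap.const (Fin n × Y) b,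
    Submodule.subset_span ⟨F, b, fun i j y hy => rfl, rfl⟩, ?_⟩
  intro z
  have h1 : (alphaMap n a F) z = ∑ i, f z.2 • a z.1 i := rfl
  rw [ContinuousMap.mul_apply, ContinuousMap.const_apply, h1, ← Finset.smul_sum, harow z.1,
    smul_mul_assoc, one_mul]

private lemma memB (haproj : ∀ i j, star (a i j) = a i j ∧ a i j * a i j = a i j)
    (harow : ∀ i, ∑ j, a i j = 1) (hacol : ∀ j, ∑ i, a i j = 1) (k₀ : Fin n) (φ : C(Y, ℂ))
    (hφ : ∀ y ∈ Y₁, φ y = 0) (b : A) :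
    ∃ h ∈ Submodule.span ℂ {h : C(Fin n × Y, A) |
        ∃ (F : C(Fin n × Y, ℂ)) (b : A),
          (∀ (i j : Fin n), ∀ y ∈ Y₁, F (i, y) = F (j, y)) ∧
          h = alphaMap n a F * ContinuousMap.const (Fin n × Y) b},
      ∀ z : Fin n × Y, h z = (if z.1 = k₀ then φ z.2 else 0) • b := by
  set F : Fin n → C(Fin n × Y, ℂ) := fun i₀ =>
    ⟨fun z => (if z.1 = i₀ then (1 : ℂ) else 0) * φ z.2,
      ((continuous_of_discreteTopology
          (f := fun k : Fin n => if k = i₀ then (1 : ℂ) else 0)).comp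
        continuous_fst).mul (φ.continuous.comp continuous_snd)⟩ with hFdef
  refine ⟨∑ i₀, alphaMap n a (F i₀) * ContinuousMap.const (Fin n × Y) (a k₀ i₀ * b),
    Submodule.sum_mem _ fun i₀ _ => Submodule.subset_span
      ⟨F i₀, a k₀ i₀ * b, fun i j y hy => by simp [F, hφ y hy], rfl⟩, ?_⟩
  intro z
  have hval : ∀ i₀ : Fin n,
      (alphaMap n a (F i₀) * ContinuousMap.const (Fin n × Y) (a k₀ i₀ * b)) z
        = (φ z.2 • a z.1 i₀) * (a k₀ i₀ * b) := by
    intro i₀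
    rw [ContinuousMap.mul_apply, ContinuousMap.const_apply]
    congr 1
    have h1 : (alphaMap n a (F i₀)) z
        = ∑ i, ((if (i : Fin n) = i₀ then (1 : ℂ) else 0) * φ z.2) • a z.1 i := rfl
    rw [h1]
    simp [ite_mul, one_mul, zero_mul, ite_smul, zero_smul]
  calc (∑ i₀, alphaMap n a (F i₀) * ContinuousMap.const (Fin n × Y) (a k₀ i₀ * b)) z
      = ∑ i₀, (φ z.2 • a z.1 i₀) * (a k₀ i₀ * b) := by
        simp only [ContinuousMap.coe_sum, Finset.sum_apply]
        exact Finset.sum_congr rfl fun i₀ _ => hval i₀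
    _ = φ z.2 • ∑ i₀, a z.1 i₀ * (a k₀ i₀ * b) := by
        rw [Finset.smul_sum]
        exact Finset.sum_congr rfl fun i₀ _ => smul_mul_assoc _ _ _
    _ = φ z.2 • ((∑ i₀, a z.1 i₀ * a k₀ i₀) * b) := by
        rw [Finset.sum_mul]
        simp only [mul_assoc]
    _ = (if z.1 = k₀ then φ z.2 else 0) • b := by
        rw [magic_sum_prod haproj harow hacol z.1 k₀]
        split_ifs <;> simp

end Mem

/-- The linear span of `{z ↦ α(F)(z) · a : F ∈ S, a ∈ A}` is dense in
`S_A = {g ∈ C(Z, A) : g(x_k, y) = g(x_l, y) for all k, l and all y ∈ Y₁}` (with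
respect to the supremum norm). -/
theorem alphaMap_span_dense_in_SA {Y : Type*} [TopologicalSpace Y] [CompactSpace Y]
    [T2Space Y] (Y₁ : Set Y) (hY₁ : IsClosed Y₁)
    {A : Type*} [NormedRing A] [StarRing A] [CStarRing A] [NormedAlgebra ℂ A]
    [StarModule ℂ A] [CompleteSpace A] (n : ℕ) (hn : 0 < n) (a : Fin n → Fin n → A)
    (haproj : ∀ i j, star (a i j) = a i j ∧ a i j * a i j = a i j)
    (harow : ∀ i, ∑ j, a i j = 1) (hacol : ∀ j, ∑ i, a i j = 1) :
    {g : C(Fin n × Y, A) | ∀ (k l : Fin n), ∀ y ∈ Y₁, g (k, y) = g (l, y)} ⊆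
      closure (Submodule.span ℂ {h : C(Fin n × Y, A) |
        ∃ (F : C(Fin n × Y, ℂ)) (b : A),
          (∀ (i j : Fin n), ∀ y ∈ Y₁, F (i, y) = F (j, y)) ∧
          h = alphaMap n a F * ContinuousMap.const (Fin n × Y) b} :
        Set C(Fin n × Y, A)) := by
  intro g hg
  rw [Metric.mem_closure_iff]
  intro ε hε
  set k0 : Fin n := ⟨0, hn⟩ with hk0
  set v : C(Y, A) := ⟨fun y => g (k0, y), g.continuous.comp (Continuous.prodMk_right k0)⟩ with hv
  set u : Fin n → C(Y, A) := fun k =>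
    ⟨fun y => g (k, y) - g (k0, y),
      (g.continuous.comp (Continuous.prodMk_right k)).sub
        (g.continuous.comp (Continuous.prodMk_right k0))⟩ with hu
  have hu1 : ∀ k, ∀ y ∈ Y₁, u k y = 0 := fun k y hy => by
    simp only [hu, ContinuousMap.coe_mk]
    exact sub_eq_zero.mpr (hg k k0 y hy)
  have hε4 : (0 : ℝ) < ε / 4 := by linarith
  obtain ⟨t, f, hf0, hfsum, hfapx⟩ := approx_pu v hε4
  choose tk fk hfk0 hfksum hfkapx using fun k : Fin n => approx_pu (u k) hε4
  have hψex : ∀ k : Fin n, ∃ ψ : C(Y, ℝ),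
      Set.EqOn ψ 0 Y₁ ∧ Set.EqOn ψ 1 {y | ε / 4 ≤ ‖u k y‖} ∧
        ∀ x, ψ x ∈ Set.Icc (0 : ℝ) 1 := by
    intro k
    refine exists_continuous_zero_one_of_isClosed hY₁
      (isClosed_le continuous_const ((u k).continuous.norm)) ?_
    rw [Set.disjoint_left]
    intro y hy hy2
    rw [Set.mem_setOf_eq, hu1 k y hy, norm_zero] at hy2
    linarith
  choose ψ hψ0 hψ1 hψicc using hψex
  choose hA hAmem hAval using fun p : Y =>
    memA Y₁ n a harow
      ⟨fun y => ((f p y : ℝ) : ℂ), Complex.continuous_ofReal.comp (f p).continuous⟩ (v p)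
  choose hB hBmem hBval using fun (k : Fin n) (p : Y) =>
    memB Y₁ n a haproj harow hacol k
      ⟨fun y => ((ψ k y * fk k p y : ℝ) : ℂ),
        Complex.continuous_ofReal.comp ((ψ k).continuous.mul (fk k p).continuous)⟩
      (fun y hy => by
        have h0 : ψ k y = 0 := by simpa using hψ0 k hy
        simp [h0])
      (u k p)
  set w1 : C(Fin n × Y, A) := ∑ p ∈ t, hA p with hw1
  set w2 : Fin n → C(Fin n × Y, A) := fun k => ∑ p ∈ tk k, hB k p with hw2
  refine ⟨w1 + ∑ k, w2 k, ?_, ?_⟩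
  · exact Submodule.add_mem _ (Submodule.sum_mem _ fun p _ => hAmem p)
      (Submodule.sum_mem _ fun k _ => Submodule.sum_mem _ fun p _ => hBmem k p)
  · rw [dist_eq_norm, ContinuousMap.norm_lt_iff _ hε]
    rintro ⟨k, y⟩
    simp only [ContinuousMap.sub_apply, ContinuousMap.add_apply]
    have hw1v : w1 (k, y) = ∑ p ∈ t, ((f p y : ℝ) : ℂ) • v p := by
      simp only [hw1, ContinuousMap.coe_sum, Finset.sum_apply]
      refine Finset.sum_congr rfl fun p _ => ?_
      exact hAval p (k, y)
    have hw2v : ∀ k' : Fin n, w2 k' (k, y) =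
        if k = k' then ∑ p ∈ tk k', ((ψ k' y * fk k' p y : ℝ) : ℂ) • u k' p else 0 := by
      intro k'
      simp only [hw2, ContinuousMap.coe_sum, Finset.sum_apply]
      by_cases hkk : k = k'
      · rw [if_pos hkk]
        refine Finset.sum_congr rfl fun p _ => ?_
        rw [hBval k' p (k, y)]
        simp only [ContinuousMap.coe_mk, if_pos hkk]
      · rw [if_neg hkk]
        refine Finset.sum_eq_zero fun p _ => ?_
        rw [hBval k' p (k, y)]
        simp only [if_neg hkk, zero_smul]
    have hsum2 : (∑ k', w2 k') (k, y)
        = ∑ p ∈ tk k, ((ψ k y * fk k p y : ℝ) : ℂ) • u k p := by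
      simp only [ContinuousMap.coe_sum, Finset.sum_apply]
      rw [Finset.sum_eq_single_of_mem k (Finset.mem_univ k)
        (fun k' _ hne => by rw [hw2v k', if_neg fun h => hne h.symm])]
      rw [hw2v k, if_pos rfl]
    have hgval : g (k, y) = v y + u k y := by
      simp only [hv, hu, ContinuousMap.coe_mk]
      abel
    rw [hw1v, hsum2, hgval]
    have key : v y + u k y - (∑ p ∈ t, ((f p y : ℝ) : ℂ) • v p
          + ∑ p ∈ tk k, ((ψ k y * fk k p y : ℝ) : ℂ) • u k p)
        = (v y - ∑ p ∈ t, ((f p y : ℝ) : ℂ) • v p)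
          + (u k y - ∑ p ∈ tk k, ((ψ k y * fk k p y : ℝ) : ℂ) • u k p) := by abel
    rw [key]
    refine lt_of_le_of_lt (norm_add_le _ _) ?_
    have e1 : ‖v y - ∑ p ∈ t, ((f p y : ℝ) : ℂ) • v p‖ ≤ ε / 4 := hfapx y
    have e2 : ‖u k y - ∑ p ∈ tk k, ((ψ k y * fk k p y : ℝ) : ℂ) • u k p‖
        ≤ ε / 4 + ε / 4 := by
      have hX2 : ∑ p ∈ tk k, ((ψ k y * fk k p y : ℝ) : ℂ) • u k p
          = ((ψ k y : ℝ) : ℂ) • ∑ p ∈ tk k, ((fk k p y : ℝ) : ℂ) • u k p := by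
        rw [Finset.smul_sum]
        refine Finset.sum_congr rfl fun p _ => ?_
        rw [← mul_smul]
        norm_cast
      set W := ∑ p ∈ tk k, ((fk k p y : ℝ) : ℂ) • u k p with hW
      have hsplit : u k y - ∑ p ∈ tk k, ((ψ k y * fk k p y : ℝ) : ℂ) • u k p
          = (u k y - ((ψ k y : ℝ) : ℂ) • u k y) + ((ψ k y : ℝ) : ℂ) • (u k y - W) := by
        rw [hX2, smul_sub]
        abel
      rw [hsplit]
      refine le_trans (norm_add_le _ _) (add_le_add ?_ ?_)
      · by_cases hyK : ε / 4 ≤ ‖u k y‖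
        · have h1 : ψ k y = 1 := by simpa using hψ1 k hyK
          rw [h1]
          have h2 : u k y - (((1 : ℝ)) : ℂ) • u k y = 0 := by simp
          rw [h2, norm_zero]
          linarith
        · push_neg at hyK
          have hicc := hψicc k y
          have h3 : u k y - ((ψ k y : ℝ) : ℂ) • u k y = (((1 - ψ k y : ℝ)) : ℂ) • u k y := by
            push_cast
            rw [sub_smul, one_smul]
          rw [h3, norm_smul, Complex.norm_real, Real.norm_eq_abs,
            abs_of_nonneg (by linarith [hicc.2] : (0:ℝ) ≤ 1 - ψ k y)]
          nlinarith [norm_nonneg (u k y), hicc.1, hicc.2]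
      · rw [norm_smul, Complex.norm_real, Real.norm_eq_abs, abs_of_nonneg (hψicc k y).1]
        have h4 := hfkapx k y
        nlinarith [(hψicc k y).2, (hψicc k y).1, norm_nonneg (u k y - W), h4]
    linarith
end

section
/- Let Y be a compact Hausdorff space, Y₁ ⊆ Y a closed subset with Y₁ ≠ Y, n ≥ 1, Xₙ = Fin n discrete, Z = Xₙ × Y, A a unital C*-algebra, (a_{ij}) a magic unitary in A, and α : C(Z, ℂ) → C(Z, A) the map α(F)(x_k, y) = Σ_{i=1}^n F(x_i, y) a_{ki}. Then for every pair of indices k, i ∈ Fin n there exist F ∈ S and a point z ∈ Z such that α(F)(z) = a_{ki}. (Consequently every generator a_{ki} lies in the image values of α restricted to S, which is the substance of the faithfulness of the induced action on Z/∼.) -/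
/-- If `Y₁ ≠ Y`, then for every pair of indices `k, i` there exist
`F ∈ S` and a point `z ∈ Z` with `α(F)(z) = a_{k i}` (faithfulness of the induced
action on `Z/∼`). -/
theorem alphaMap_faithful {Y : Type*} [TopologicalSpace Y] [CompactSpace Y] [T2Space Y]
    (Y₁ : Set Y) (hY₁ : IsClosed Y₁) (hY₁ne : Y₁ ≠ Set.univ)
    {A : Type*} [NormedRing A] [StarRing A] [CStarRing A] [NormedAlgebra ℂ A]
    [StarModule ℂ A] [CompleteSpace A] (n : ℕ) (hn : 0 < n) (a : Fin n → Fin n → A)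
    (haproj : ∀ i j, star (a i j) = a i j ∧ a i j * a i j = a i j)
    (harow : ∀ i, ∑ j, a i j = 1) (hacol : ∀ j, ∑ i, a i j = 1) :
    ∀ k i : Fin n, ∃ F : C(Fin n × Y, ℂ),
      (∀ (i' j' : Fin n), ∀ y ∈ Y₁, F (i', y) = F (j', y)) ∧
      ∃ z : Fin n × Y, alphaMap n a F z = a k i := by
  intro k i
  obtain ⟨y₀, hy₀⟩ : ∃ y₀, y₀ ∉ Y₁ := by
    by_contra h
    push_neg at h
    exact hY₁ne (Set.eq_univ_of_forall h)
  obtain ⟨g, hg0, hg1, _⟩ := exists_continuous_zero_one_of_isClosed hY₁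
    (isClosed_singleton (x := y₀)) (Set.disjoint_singleton_right.mpr hy₀)
  refine ⟨⟨fun z => (if z.1 = i then (1 : ℂ) else 0) * (g z.2 : ℂ), ?_⟩, ?_, ?_⟩
  · exact ((continuous_of_discreteTopology
        (f := fun j : Fin n => if j = i then (1 : ℂ) else 0)).comp continuous_fst).mul
      (Complex.continuous_ofReal.comp (g.continuous.comp continuous_snd))
  · intro i' j' y hy
    simp [hg0 hy]
  · refine ⟨(k, y₀), ?_⟩
    have hgy : g y₀ = 1 := hg1 (Set.mem_singleton y₀)
    simp only [alphaMap, ContinuousMap.coe_mk, hgy]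
    rw [Finset.sum_eq_single i]
    · simp
    · intro b _ hb; simp [hb]
    · simp
end
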